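/- The function v(r) = 1/r (i.e., v = u' for the radial potential u(r) = ln r on ℝ^4∖{0}) satisfies the radial Hamiltonian stationary ODE with n = 4 and C = −4: for every r > 0, v''(r)/(1+v'(r)^2) + 3(r·v'(r) − v(r))/(r^2+v(r)^2) = −4·(1+v'(r)^2)^{1/2}/(r^2+v(r)^2)^{3/2}; explicitly, (2/r^3)/(1+1/r^4) + 3(−2/r)/(r^2+1/r^2) = −4·(1+1/r^4)^{1/2}/(r^2+1/r^2)^{3/2}, both sides equaling −4r/(r^4+1). Hence u(r) = ln r is a radial Hamiltonian stationary solution in dimension 4 that is not special Lagrangian. -/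

import Mathlib

/-- The function `v(r) = 1/r` (i.e. `v = u'` for the radial potential
`u(r) = ln r` on `ℝ⁴ ∖ {0}`) satisfies the radial Hamiltonian stationary ODE with
`n = 4` and `C = −4`: for every `r > 0`,
`v''/(1+(v')²) + 3(r v' − v)/(r²+v²) = −4 √(1+(v')²)/(r²+v²)^{3/2}`,
both sides equaling `−4r/(r⁴+1)`.  Hence `u(r) = ln r` is a radial Hamiltonian
stationary solution in dimension 4 which is not special Lagrangian. -/
theorem u_eq_log_is_hamiltonian_stationary_dim_four
    (v : ℝ → ℝ) (hv : v = fun r => 1 / r) :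
    ∀ r : ℝ, 0 < r →
      (deriv (deriv v) r / (1 + (deriv v r) ^ 2)
          + 3 * (r * deriv v r - v r) / (r ^ 2 + (v r) ^ 2)
        = -4 * Real.sqrt (1 + (deriv v r) ^ 2)
            / Real.sqrt ((r ^ 2 + (v r) ^ 2) ^ 3)) ∧
      -4 * Real.sqrt (1 + (deriv v r) ^ 2) / Real.sqrt ((r ^ 2 + (v r) ^ 2) ^ 3)
        = -4 * r / (r ^ 4 + 1) := by
  intro r hr
  have hr0 : r ≠ 0 := hr.ne'
  -- first derivative
  have hd1 : deriv v = fun x : ℝ => -(x ^ 2)⁻¹ := by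
    funext x
    rw [hv]
    simp [one_div, deriv_inv]
  -- second derivative at r
  have hd2 : deriv (deriv v) r = 2 * r / (r ^ 2) ^ 2 := by
    rw [hd1]
    have h : HasDerivAt (fun x : ℝ => -(x ^ 2)⁻¹)
        (-(-(((2:ℕ):ℝ) * r ^ (2 - 1)) / (r ^ 2) ^ 2)) r :=
      ((hasDerivAt_pow 2 r).inv (pow_ne_zero 2 hr0)).neg
    rw [h.deriv]
    push_cast
    ring
  have hvr : v r = r⁻¹ := by rw [hv]; simp [one_div]
  have hdr : deriv v r = -(r ^ 2)⁻¹ := by rw [hd1]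
  have h4 : (0:ℝ) < r ^ 4 + 1 := by positivity
  set s := Real.sqrt (r ^ 4 + 1) with hs
  have hs0 : 0 < s := Real.sqrt_pos.mpr h4
  have hs2 : s ^ 2 = r ^ 4 + 1 := Real.sq_sqrt h4.le
  -- sqrt simplifications
  have e1 : Real.sqrt (1 + (deriv v r) ^ 2) = s / r ^ 2 := by
    rw [hdr, show (1 + (-(r ^ 2)⁻¹) ^ 2) = (s / r ^ 2) ^ 2 by
      field_simp; nlinarith [hs2]]
    exact Real.sqrt_sq (by positivity)
  have e2 : Real.sqrt ((r ^ 2 + (v r) ^ 2) ^ 3) = (r ^ 4 + 1) * s / r ^ 3 := by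
    rw [hvr, show ((r ^ 2 + r⁻¹ ^ 2) ^ 3) = ((r ^ 4 + 1) * s / r ^ 3) ^ 2 by
      field_simp; rw [hs2]]
    exact Real.sqrt_sq (by positivity)
  constructor
  · rw [e1, e2, hd2, hdr, hvr]
    field_simp
    ring
  · rw [e1, e2]
    field_simp
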